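/- arXiv:1408.2281 — 4 statements merged into one kernel-verified Lean document; each statement's English description precedes it below -/
import Mathlib

section
/- Let n ≥ 1. Given a tree T that is (2n−1)-good from a string α and a set P ⊆ T, there is a subset S of T which is n-good from α for P or n-good from α for T \ P. -/
/-- A *tree*: a finite set of pairwise incomparable strings (antichain under
the prefix/extension order), where a string is a finite sequence of naturals. -/
def IsTree (T : Finset (List ℕ)) : Prop :=
  ∀ σ ∈ T, ∀ τ ∈ T, σ <+: τ → σ = τ

/-- `T` is `a`-good from `σ`: `T` is nonempty, every string in `T` extends `σ`,
and for every `τ` with `σ ⊆ τ ⊊ ρ` for some `ρ ∈ T`, at least `a` immediate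
successors `τ*k` of `τ` are initial segments of elements of `T`. -/
def GoodFrom (a : ℕ) (T : Finset (List ℕ)) (σ : List ℕ) : Prop :=
  T.Nonempty ∧ (∀ ρ ∈ T, σ <+: ρ) ∧
    ∀ τ : List ℕ, (∃ ρ ∈ T, σ <+: τ ∧ τ <+: ρ ∧ τ ≠ ρ) →
      a ≤ {k : ℕ | ∃ ρ ∈ T, τ ++ [k] <+: ρ}.ncard

/-- `T` is `a`-good from `σ` for `P`: in addition `T ⊆ P`. -/
def GoodFromFor (a : ℕ) (T : Finset (List ℕ)) (σ : List ℕ) (P : Set (List ℕ)) : Prop :=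
  GoodFrom a T σ ∧ ↑T ⊆ P

/-- The set of successor indices of `τ` realized in a finite set `S` is finite. -/
lemma finite_succ_set (S : Finset (List ℕ)) (τ : List ℕ) :
    {k : ℕ | ∃ ρ ∈ S, τ ++ [k] <+: ρ}.Finite := by
  apply Set.Finite.subset (S.image fun ρ => ρ.getD τ.length 0).finite_toSet
  rintro k ⟨ρ, hρ, hpre⟩
  simp only [Finset.coe_image, Set.mem_image, Finset.mem_coe]
  refine ⟨ρ, hρ, ?_⟩
  have hlen : τ.length < (τ ++ [k]).length := by simp
  have hlt : τ.length < ρ.length := lt_of_lt_of_le hlen hpre.length_le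
  rw [List.getD_eq_getElem _ _ hlt, ← hpre.getElem hlen]
  exact List.getElem_concat_length rfl _

/-- Singleton case: if `τ ∈ T`, then `{τ}` works. -/
lemma singleton_case (n : ℕ) (T : Finset (List ℕ)) (P : Set (List ℕ)) (τ : List ℕ)
    (hτT : τ ∈ T) :
    ∃ S : Finset (List ℕ), S ⊆ T ∧ GoodFrom n S τ ∧ (↑S ⊆ P ∨ ↑S ⊆ ↑T \ P) := by
  refine ⟨({τ} : Finset (List ℕ)), by simpa using hτT, ⟨⟨τ, Finset.mem_singleton_self τ⟩, ?_, ?_⟩, ?_⟩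
  · intro ρ hρ
    rw [Finset.mem_singleton] at hρ
    rw [hρ]
  · rintro τ' ⟨ρ, hρ, h1, h2, h3⟩
    rw [Finset.mem_singleton] at hρ
    subst hρ
    exact absurd (h2.eq_of_length (le_antisymm h2.length_le h1.length_le)) h3
  · by_cases hτP : τ ∈ P
    · left; intro x hx; rw [Finset.coe_singleton, Set.mem_singleton_iff] at hx
      subst hx; exact hτP
    · right; intro x hx; rw [Finset.coe_singleton, Set.mem_singleton_iff] at hx
      subst hx; exact ⟨hτT, hτP⟩

/-- Main induction: below any node `τ` of the tree domain there is an `n`-good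
subset lying entirely in `P` or entirely in `T \ P`. -/
lemma main_ind (n : ℕ) (hn : 1 ≤ n) (T : Finset (List ℕ)) (α : List ℕ)
    (hgood : GoodFrom (2 * n - 1) T α) (P : Set (List ℕ)) :
    ∀ m : ℕ, ∀ τ : List ℕ, T.sup List.length ≤ τ.length + m → α <+: τ →
      (∃ ρ ∈ T, τ <+: ρ) →
      ∃ S : Finset (List ℕ), S ⊆ T ∧ GoodFrom n S τ ∧ (↑S ⊆ P ∨ ↑S ⊆ ↑T \ P) := by
  intro m
  induction m with
  | zero =>
    intro τ hm hατ ⟨ρ, hρT, hτρ⟩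
    have h1 : ρ.length ≤ T.sup List.length := Finset.le_sup (f := List.length) hρT
    have h2 : τ.length ≤ ρ.length := hτρ.length_le
    have : τ = ρ := hτρ.eq_of_length (by omega)
    subst this
    exact singleton_case n T P τ hρT
  | succ m ih =>
    intro τ hm hατ ⟨ρ, hρT, hτρ⟩
    classical
    by_cases hτT : τ ∈ T
    · exact singleton_case n T P τ hτT
    · have hτρne : τ ≠ ρ := fun h => hτT (h ▸ hρT)
      have hτρlt : τ.length < ρ.length := by
        have := hτρ.length_le
        rcases lt_or_eq_of_le this with h | h
        · exact h
        · exact absurd (hτρ.eq_of_length h) hτρne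
      have hρsup : ρ.length ≤ T.sup List.length := Finset.le_sup (f := List.length) hρT
      -- the set of successors of τ in T
      set K : Set ℕ := {k : ℕ | ∃ ρ ∈ T, τ ++ [k] <+: ρ} with hK
      have hKfin : K.Finite := finite_succ_set T τ
      have hKcard : 2 * n - 1 ≤ K.ncard :=
        hgood.2.2 τ ⟨ρ, hρT, hατ, hτρ, hτρne⟩
      -- apply IH at each τ ++ [k] for k ∈ K
      have hIH : ∀ k ∈ K, ∃ S : Finset (List ℕ),
          S ⊆ T ∧ GoodFrom n S (τ ++ [k]) ∧ (↑S ⊆ P ∨ ↑S ⊆ ↑T \ P) := by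
        rintro k ⟨ρ', hρ'T, hpre⟩
        refine ih (τ ++ [k]) ?_ (hατ.trans (List.prefix_append τ [k])) ⟨ρ', hρ'T, hpre⟩
        simp only [List.length_append, List.length_cons, List.length_nil]
        omega
      choose! f hfT hfg hfP using hIH
      set KF : Finset ℕ := hKfin.toFinset with hKF
      have hmemKF : ∀ k, k ∈ KF ↔ k ∈ K := fun k => hKfin.mem_toFinset
      have hKFcard : 2 * n - 1 ≤ KF.card := by
        rwa [Set.ncard_eq_toFinset_card K hKfin] at hKcard
      set KP : Finset ℕ := KF.filter (fun k => ↑(f k) ⊆ P) with hKP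
      set KQ : Finset ℕ := KF.filter (fun k => ¬ ↑(f k) ⊆ P) with hKQ
      have hsplit : KP.card + KQ.card = KF.card :=
        Finset.card_filter_add_card_filter_not _
      -- the key construction
      have key : ∀ (B : Finset ℕ) (Q : Set (List ℕ)), B ⊆ KF → n ≤ B.card →
          (∀ k ∈ B, ↑(f k) ⊆ Q) →
          ∃ S : Finset (List ℕ), S ⊆ T ∧ GoodFrom n S τ ∧ ↑S ⊆ Q := by
        intro B Q hBKF hBcard hBQ
        have hgk : ∀ k ∈ B, GoodFrom n (f k) (τ ++ [k]) := fun k hk =>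
          hfg k ((hmemKF k).mp (hBKF hk))
        refine ⟨B.biUnion f, ?_, ⟨?_, ?_, ?_⟩, ?_⟩
        · intro x hx
          obtain ⟨k, hk, hxk⟩ := Finset.mem_biUnion.mp hx
          exact hfT k ((hmemKF k).mp (hBKF hk)) hxk
        · obtain ⟨k, hk⟩ := Finset.card_pos.mp (lt_of_lt_of_le hn hBcard)
          obtain ⟨x, hx⟩ := (hgk k hk).1
          exact ⟨x, Finset.mem_biUnion.mpr ⟨k, hk, hx⟩⟩
        · intro x hx
          obtain ⟨k, hk, hxk⟩ := Finset.mem_biUnion.mp hx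
          exact (List.prefix_append τ [k]).trans ((hgk k hk).2.1 x hxk)
        · rintro τ' ⟨x, hxS, hττ', hτ'x, hne⟩
          obtain ⟨k, hk, hxk⟩ := Finset.mem_biUnion.mp hxS
          by_cases hττ : τ' = τ
          · subst hττ
            have hsub : (↑B : Set ℕ) ⊆ {k' : ℕ | ∃ ρ ∈ B.biUnion f, τ' ++ [k'] <+: ρ} := by
              intro k' hk'
              rw [Finset.mem_coe] at hk'
              obtain ⟨y, hy⟩ := (hgk k' hk').1
              exact ⟨y, Finset.mem_biUnion.mpr ⟨k', hk', hy⟩, (hgk k' hk').2.1 y hy⟩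
            calc n ≤ B.card := hBcard
              _ = (↑B : Set ℕ).ncard := (Set.ncard_coe_finset B).symm
              _ ≤ _ := Set.ncard_le_ncard hsub (finite_succ_set _ τ')
          · have hlt : τ.length < τ'.length := by
              rcases lt_or_eq_of_le hττ'.length_le with h | h
              · exact h
              · exact absurd (hττ'.eq_of_length h).symm hττ
            have hpk : τ ++ [k] <+: x := (hgk k hk).2.1 x hxk
            have hkτ' : τ ++ [k] <+: τ' :=
              List.prefix_of_prefix_length_le hpk hτ'x (by simp; omega)
            have hn' := (hgk k hk).2.2 τ' ⟨x, hxk, hkτ', hτ'x, hne⟩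
            refine le_trans hn' (Set.ncard_le_ncard ?_ (finite_succ_set _ τ'))
            rintro k' ⟨y, hy, hpre⟩
            exact ⟨y, Finset.subset_biUnion_of_mem f hk hy, hpre⟩
        · intro x hx
          rw [Finset.mem_coe] at hx
          obtain ⟨k, hk, hxk⟩ := Finset.mem_biUnion.mp hx
          exact hBQ k hk hxk
      rcases le_or_gt n KP.card with hbig | hsmall
      · obtain ⟨S, hST, hSg, hSQ⟩ := key KP P (Finset.filter_subset _ _) hbig
          (fun k hk => (Finset.mem_filter.mp hk).2)
        exact ⟨S, hST, hSg, Or.inl hSQ⟩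
      · have hbig : n ≤ KQ.card := by omega
        obtain ⟨S, hST, hSg, hSQ⟩ := key KQ (↑T \ P) (Finset.filter_subset _ _) hbig
          (fun k hk => by
            have h1 := (Finset.mem_filter.mp hk).2
            have h2 := hfP k ((hmemKF k).mp (Finset.mem_filter.mp hk).1)
            tauto)
        exact ⟨S, hST, hSg, Or.inr hSQ⟩

/-- Given a tree `T` that is `(2n−1)`-good from `α` and a set `P ⊆ T`, there is a
subset `S` of `T` which is `n`-good from `α` for `P` or `n`-good from `α` for `T \ P`. -/
theorem good_subset_or_complement (n : ℕ) (hn : 1 ≤ n)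
    (T : Finset (List ℕ)) (hT : IsTree T) (α : List ℕ)
    (hgood : GoodFrom (2 * n - 1) T α)
    (P : Set (List ℕ)) (hP : P ⊆ ↑T) :
    ∃ S ⊆ T, GoodFromFor n S α P ∨ GoodFromFor n S α (↑T \ P) := by
  obtain ⟨ρ, hρT⟩ := hgood.1
  obtain ⟨S, hST, hSg, hSQ⟩ := main_ind n hn T α hgood P (T.sup List.length) α
    (by omega) (List.prefix_refl α) ⟨ρ, hρT, hgood.2.1 ρ hρT⟩
  rcases hSQ with h | h
  · exact ⟨S, hST, Or.inl ⟨hSg, h⟩⟩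
  · exact ⟨S, hST, Or.inr ⟨hSg, h⟩⟩
end

section
/- For every DNR string α, there is no 2-good tree from α for the set of strings that are not DNR strings. In particular, since the empty string is a DNR string, there is no 2-good tree from the empty string for the set of non-DNR strings. -/
/-- `σ` is a DNR string: for every `x < |σ|`, it is not the case that the `x`-th
partial recursive function (in the standard numbering via `Nat.Partrec.Code`)
halts on input `x` with value `σ(x)`. -/
def DNRString (σ : List ℕ) : Prop :=
  ∀ (x : ℕ) (h : x < σ.length),
    σ.get ⟨x, h⟩ ∉ (Denumerable.ofNat Nat.Partrec.Code x).eval x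

lemma dnr_aux : ∀ (n : ℕ) (α : List ℕ) (T : Finset (List ℕ)), DNRString α →
    T.sup List.length ≤ α.length + n → IsTree T →
    GoodFromFor 2 T α {σ | ¬ DNRString σ} → False := by
  intro n
  induction n with
  | zero =>
    intro α T hα hsup htree ⟨⟨hne, hpre, _⟩, hsub⟩
    obtain ⟨ρ, hρ⟩ := hne
    have h1 : α <+: ρ := hpre ρ hρ
    have h2 : ρ.length ≤ α.length := le_trans (Finset.le_sup hρ) (by omega)
    have : α = ρ := h1.eq_of_length (le_antisymm h1.length_le h2)
    exact hsub (by simpa [this] using hρ) hα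
  | succ n ih =>
    intro α T hα hsup htree ⟨⟨hne, hpre, hsucc⟩, hsub⟩
    by_cases hαT : α ∈ T
    · exact hsub hαT hα
    obtain ⟨ρ₀, hρ₀⟩ := hne
    have hneq : α ≠ ρ₀ := fun h => hαT (h ▸ hρ₀)
    have h2 := hsucc α ⟨ρ₀, hρ₀, List.prefix_refl α, hpre ρ₀ hρ₀, hneq⟩
    set S : Set ℕ := {k : ℕ | ∃ ρ ∈ T, α ++ [k] <+: ρ} with hS
    have hfin : S.Finite := by
      by_contra h
      rw [Set.Infinite.ncard h] at h2; omega
    obtain ⟨k₁, k₂, hk₁, hk₂, hkk⟩ := (Set.one_lt_ncard_iff hfin).mp (by omega)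
    have hpick : ∃ k ∈ S, k ∉ (Denumerable.ofNat Nat.Partrec.Code α.length).eval α.length := by
      by_cases h1 : k₁ ∈ (Denumerable.ofNat Nat.Partrec.Code α.length).eval α.length
      · refine ⟨k₂, hk₂, fun h2' => hkk (Part.mem_unique h1 h2')⟩
      · exact ⟨k₁, hk₁, h1⟩
    obtain ⟨k, hkS, hkE⟩ := hpick
    obtain ⟨ρ, hρT, hkpre⟩ := hkS
    have hdnr : DNRString (α ++ [k]) := by
      intro x hx
      rw [List.get_eq_getElem]
      rcases lt_or_eq_of_le (Nat.lt_succ_iff.mp (by simpa using hx)) with hlt | heq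
      · rw [List.getElem_append_left hlt]
        exact fun hmem => hα x hlt (by rw [List.get_eq_getElem]; exact hmem)
      · subst heq
        simpa using hkE
    set T' : Finset (List ℕ) := T.filter (fun ρ => (α ++ [k]) <+: ρ) with hT'
    apply ih (α ++ [k]) T' hdnr
    · refine le_trans (Finset.sup_mono (Finset.filter_subset _ _)) ?_
      simp only [List.length_append, List.length_cons, List.length_nil]
      omega
    · intro σ hσ τ hτ
      exact htree σ (Finset.mem_of_mem_filter _ hσ) τ (Finset.mem_of_mem_filter _ hτ)
    refine ⟨⟨⟨ρ, Finset.mem_filter.mpr ⟨hρT, hkpre⟩⟩, ?_, ?_⟩, ?_⟩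
    · intro ρ' hρ'
      exact (Finset.mem_filter.mp hρ').2
    · intro τ ⟨ρ', hρ', hp1, hp2, hnq⟩
      obtain ⟨hρ'T, hρ'k⟩ := Finset.mem_filter.mp hρ'
      have hατ : α <+: τ := ((α.prefix_append [k]).trans hp1)
      have h3 := hsucc τ ⟨ρ', hρ'T, hατ, hp2, hnq⟩
      have hset : {m : ℕ | ∃ ρ ∈ T', τ ++ [m] <+: ρ} = {m : ℕ | ∃ ρ ∈ T, τ ++ [m] <+: ρ} := by
        ext m
        constructor
        · rintro ⟨ρ'', hρ'', hm⟩
          exact ⟨ρ'', Finset.mem_of_mem_filter _ hρ'', hm⟩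
        · rintro ⟨ρ'', hρ'', hm⟩
          refine ⟨ρ'', Finset.mem_filter.mpr ⟨hρ'', ?_⟩, hm⟩
          exact hp1.trans ((τ.prefix_append [m]).trans hm)
      rw [hset]; exact h3
    · exact fun σ hσ => hsub (Finset.mem_coe.mp (by exact_mod_cast Finset.filter_subset _ T (by exact_mod_cast hσ)))


/-- For every DNR string `α`, there is no `2`-good tree from `α` for the set of
non-DNR strings; in particular, the empty string is DNR and there is no `2`-good
tree from the empty string for the set of non-DNR strings. -/
theorem no_two_good_tree_of_nonDNR :
    (∀ α : List ℕ, DNRString α →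
      ¬ ∃ T : Finset (List ℕ), IsTree T ∧ GoodFromFor 2 T α {σ | ¬ DNRString σ}) ∧
    DNRString [] ∧
    ¬ ∃ T : Finset (List ℕ), IsTree T ∧ GoodFromFor 2 T [] {σ | ¬ DNRString σ} := by
  have hmain : ∀ α : List ℕ, DNRString α →
      ¬ ∃ T : Finset (List ℕ), IsTree T ∧ GoodFromFor 2 T α {σ | ¬ DNRString σ} := by
    rintro α hα ⟨T, htree, hgood⟩
    exact dnr_aux (T.sup List.length) α T hα (Nat.le_add_left _ _) htree hgood
  have hnil : DNRString [] := by intro x h; simp at h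
  exact ⟨hmain, hnil, hmain [] hnil⟩
end

section
/- For every natural number n, the fair-coin product measure of the set U_n = {A ∈ 2^ω : there exists x > n such that φ_x(x) halts and f*_A(x) = φ_x(x)} is at most 2^{−n}. -/
open MeasureTheory
open scoped ENNReal

/-- `f*_A(x)`: the restriction of `A : ℕ → Bool` to `{0,…,x−1}`, regarded as a
natural number `< 2^x`. -/
def fstar (A : ℕ → Bool) (x : ℕ) : ℕ :=
  ∑ i ∈ Finset.range x, if A i then 2 ^ i else 0

/-- `μ` is the fair-coin product probability measure on Cantor space
`2^ω = (ℕ → Bool)`, i.e. the countable product of the Bernoulli(1/2) measure on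
`Bool`, characterized by being a probability measure giving each cylinder
(finitely many prescribed coordinates) its fair-coin probability. -/
def IsFairCoinMeasure (μ : Measure (ℕ → Bool)) : Prop :=
  IsProbabilityMeasure μ ∧
    ∀ (F : Finset ℕ) (σ : ℕ → Bool),
      μ {A : ℕ → Bool | ∀ i ∈ F, A i = σ i} = (1 / 2 : ℝ≥0∞) ^ F.card

lemma fstar_lt (A : ℕ → Bool) (x : ℕ) : fstar A x < 2 ^ x := by
  induction x with
  | zero => simp [fstar]
  | succ x ih =>
    have : fstar A (x + 1) = fstar A x + (if A x then 2 ^ x else 0) := by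
      simp [fstar, Finset.sum_range_succ]
    rw [this, pow_succ]
    split <;> omega

lemma fstar_inj (A B : ℕ → Bool) :
    ∀ x, fstar A x = fstar B x → ∀ i < x, A i = B i := by
  intro x
  induction x with
  | zero => intro _ i hi; omega
  | succ x ih =>
    intro h
    have hA := fstar_lt A x
    have hB := fstar_lt B x
    have h' : fstar A x + (if A x then 2 ^ x else 0)
        = fstar B x + (if B x then 2 ^ x else 0) := by
      simpa [fstar, Finset.sum_range_succ] using h
    have hAB : A x = B x := by
      cases hAx : A x <;> cases hBx : B x <;> simp [hAx, hBx] at h' ⊢ <;> omega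
    have h2 : fstar A x = fstar B x := by
      rw [hAB] at h'
      cases hBx : B x <;> simp [hBx] at h' <;> omega
    intro i hi
    rcases Nat.lt_succ_iff_lt_or_eq.mp hi with h3 | h3
    · exact ih h2 i h3
    · rw [h3]; exact hAB

/-- The fair-coin measure of
`U_n = {A : ∃ x > n, φ_x(x) halts and f*_A(x) = φ_x(x)}` is at most `2^{−n}`. -/
theorem measure_Un_le (μ : Measure (ℕ → Bool)) (hμ : IsFairCoinMeasure μ) (n : ℕ) :
    μ {A : ℕ → Bool |
        ∃ x > n, fstar A x ∈ (Denumerable.ofNat Nat.Partrec.Code x).eval x}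
      ≤ (1 / 2 : ℝ≥0∞) ^ n := by
  obtain ⟨hprob, hcyl⟩ := hμ
  set E : ℕ → Set (ℕ → Bool) :=
    fun x => {A | fstar A x ∈ (Denumerable.ofNat Nat.Partrec.Code x).eval x} with hEdef
  have hE : ∀ x, μ (E x) ≤ (1 / 2 : ℝ≥0∞) ^ x := by
    intro x
    by_cases hne : (E x).Nonempty
    · obtain ⟨A0, hA0⟩ := hne
      have hsub : E x ⊆ {A | ∀ i ∈ Finset.range x, A i = A0 i} := by
        intro A hA i hi
        have heq : fstar A x = fstar A0 x := Part.mem_unique hA hA0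
        exact fstar_inj A A0 x heq i (Finset.mem_range.mp hi)
      calc μ (E x) ≤ μ {A | ∀ i ∈ Finset.range x, A i = A0 i} := measure_mono hsub
        _ = (1 / 2 : ℝ≥0∞) ^ (Finset.range x).card := hcyl _ _
        _ = (1 / 2 : ℝ≥0∞) ^ x := by rw [Finset.card_range]
    · rw [Set.not_nonempty_iff_eq_empty.mp hne]
      simp
  have hsub2 : {A : ℕ → Bool |
        ∃ x > n, fstar A x ∈ (Denumerable.ofNat Nat.Partrec.Code x).eval x}
      ⊆ ⋃ k : ℕ, E (n + 1 + k) := by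
    rintro A ⟨x, hx, hmem⟩
    refine Set.mem_iUnion.mpr ⟨x - (n + 1), ?_⟩
    have hx' : n + 1 + (x - (n + 1)) = x := by omega
    rw [hx']
    exact hmem
  calc μ _ ≤ μ (⋃ k : ℕ, E (n + 1 + k)) := measure_mono hsub2
    _ ≤ ∑' k : ℕ, μ (E (n + 1 + k)) := measure_iUnion_le _
    _ ≤ ∑' k : ℕ, (1 / 2 : ℝ≥0∞) ^ (n + 1 + k) :=
        ENNReal.tsum_le_tsum fun k => hE _
    _ = (1 / 2 : ℝ≥0∞) ^ (n + 1) * ∑' k : ℕ, (1 / 2 : ℝ≥0∞) ^ k := by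
        simp [pow_add, ENNReal.tsum_mul_left]
    _ = (1 / 2 : ℝ≥0∞) ^ n := by
        rw [ENNReal.tsum_geometric, pow_succ]
        have h2 : (1 - 1 / 2 : ℝ≥0∞)⁻¹ = 2 := by
          rw [one_div, ENNReal.one_sub_inv_two]
          simp
        rw [h2]
        have : (1 / 2 : ℝ≥0∞) * 2 = 1 := by
          rw [one_div, ENNReal.inv_mul_cancel] <;> simp
        rw [mul_assoc, this, mul_one]
end

section
/- Let m < n be natural numbers with n ≥ 1, let α be a string, and let P be a set of strings. Suppose T is an n/m-good tree from α for P (i.e., T is n/m-good from α and T ⊆ P), but there is no n/(m+1)-good tree from α for P. Let k_1,…,k_m be m distinct natural numbers such that for each i, T contains a subset which is an n-good tree from α*k_i for P. Then there is no natural number k ∉ {k_1,…,k_m} such that T contains a subset which is an n-good tree from α*k for P. -/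
/-- `T` is `n/m`-good ("`n` over `m`" good) from `α`: at least `m` immediate
successors of `α` have extensions in `T`, and for every string `β` properly
extending `α` and having a proper extension in `T`, at least `n` immediate
successors of `β` have extensions in `T`. -/
def GoodOverFrom (n m : ℕ) (T : Finset (List ℕ)) (α : List ℕ) : Prop :=
  m ≤ {k : ℕ | ∃ ρ ∈ T, α ++ [k] <+: ρ}.ncard ∧
    ∀ β : List ℕ, α <+: β → α ≠ β → (∃ ρ ∈ T, β <+: ρ ∧ β ≠ ρ) →
      n ≤ {k : ℕ | ∃ ρ ∈ T, β ++ [k] <+: ρ}.ncard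

lemma succ_set_finite (S : Finset (List ℕ)) (β : List ℕ) :
    {j : ℕ | ∃ ρ ∈ S, β ++ [j] <+: ρ}.Finite := by
  apply Set.Finite.subset (S.finite_toSet.image (fun ρ => ρ[β.length]?.getD 0))
  rintro j ⟨ρ, hρ, t, rfl⟩
  exact ⟨β ++ [j] ++ t, hρ, by simp [List.getElem_append_right]⟩

lemma succ_set_mono (S U : Finset (List ℕ)) (h : S ⊆ U) (β : List ℕ) :
    {j : ℕ | ∃ ρ ∈ S, β ++ [j] <+: ρ}.ncard ≤ {j : ℕ | ∃ ρ ∈ U, β ++ [j] <+: ρ}.ncard :=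
  Set.ncard_le_ncard (fun j ⟨ρ, hρ, hpre⟩ => ⟨ρ, h hρ, hpre⟩) (succ_set_finite U β)

lemma key_step (n : ℕ) (S₀ U : Finset (List ℕ)) (hsub : S₀ ⊆ U) (σ β : List ℕ)
    (hg : GoodFrom n S₀ σ) (ρ : List ℕ) (hρ : ρ ∈ S₀) (hβρ : β <+: ρ) (hne : β ≠ ρ)
    (hlen : σ.length ≤ β.length) :
    n ≤ {j : ℕ | ∃ ρ ∈ U, β ++ [j] <+: ρ}.ncard := by
  have hσρ : σ <+: ρ := hg.2.1 ρ hρ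
  have hσβ : σ <+: β := List.prefix_of_prefix_length_le hσρ hβρ hlen
  exact le_trans (hg.2.2 β ⟨ρ, hρ, hσβ, hβρ, hne⟩) (succ_set_mono S₀ U hsub β)

/-- Suppose `m < n`, `T` is an `n/m`-good tree from `α` for `P`, but there is no
`n/(m+1)`-good tree from `α` for `P`, and `k_1, …, k_m` are `m` distinct numbers
such that for each `i`, `T` contains a subset which is an `n`-good tree from
`α*k_i` for `P`. Then there is no `k ∉ {k_1, …, k_m}` such that `T` contains a
subset which is an `n`-good tree from `α*k` for `P`. -/
theorem no_extra_good_direction (m n : ℕ) (hmn : m < n) (hn : 1 ≤ n)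
    (α : List ℕ) (P : Set (List ℕ))
    (T : Finset (List ℕ)) (hT : IsTree T)
    (hgood : GoodOverFrom n m T α) (hTP : ↑T ⊆ P)
    (hno : ¬ ∃ S : Finset (List ℕ), IsTree S ∧ GoodOverFrom n (m + 1) S α ∧ ↑S ⊆ P)
    (k : Fin m → ℕ) (hk : Function.Injective k)
    (hki : ∀ i : Fin m, ∃ S ⊆ T, GoodFromFor n S (α ++ [k i]) P) :
    ¬ ∃ k' : ℕ, k' ∉ Set.range k ∧ ∃ S ⊆ T, GoodFromFor n S (α ++ [k']) P := by
  rintro ⟨k', hk', S', hS'T, hS'⟩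
  choose Si hSiT hSi using hki
  classical
  set U : Finset (List ℕ) := S' ∪ (Finset.univ : Finset (Fin m)).biUnion Si with hU
  have hS'U : S' ⊆ U := Finset.subset_union_left
  have hSiU : ∀ i, Si i ⊆ U := fun i =>
    (Finset.subset_biUnion_of_mem Si (Finset.mem_univ i)).trans Finset.subset_union_right
  have hUT : U ⊆ T := by
    intro ρ hρ
    rcases Finset.mem_union.1 hρ with h | h
    · exact hS'T h
    · obtain ⟨i, _, h⟩ := Finset.mem_biUnion.1 h
      exact hSiT i h
  apply hno
  refine ⟨U, fun σ hσ τ hτ hpre => hT σ (hUT hσ) τ (hUT hτ) hpre, ⟨?_, ?_⟩,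
    fun ρ hρ => hTP (hUT hρ)⟩
  · -- m + 1 successors of α
    have hf : Function.Injective (Fin.cons k' k : Fin (m + 1) → ℕ) :=
      Fin.cons_injective_iff.2 ⟨hk', hk⟩
    have hsub : Set.range (Fin.cons k' k : Fin (m + 1) → ℕ) ⊆
        {j : ℕ | ∃ ρ ∈ U, α ++ [j] <+: ρ} := by
      rintro j ⟨i, rfl⟩
      induction i using Fin.cases with
      | zero =>
        obtain ⟨ρ, hρ⟩ := hS'.1.1
        exact ⟨ρ, hS'U hρ, by simpa using hS'.1.2.1 ρ hρ⟩
      | succ i =>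
        obtain ⟨ρ, hρ⟩ := (hSi i).1.1
        exact ⟨ρ, hSiU i hρ, by simpa using (hSi i).1.2.1 ρ hρ⟩
    calc m + 1 = Nat.card (Fin (m + 1)) := by simp
      _ = Nat.card (Set.range (Fin.cons k' k : Fin (m + 1) → ℕ)) :=
          (Nat.card_range_of_injective hf).symm
      _ = (Set.range (Fin.cons k' k : Fin (m + 1) → ℕ)).ncard :=
          Nat.card_coe_set_eq _
      _ ≤ _ := Set.ncard_le_ncard hsub (succ_set_finite U α)
  · -- internal branching
    rintro β hαβ hαβne ⟨ρ, hρ, hβρ, hβρne⟩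
    have hlen : α.length + 1 ≤ β.length := by
      rcases lt_or_eq_of_le hαβ.length_le with h | h
      · omega
      · exact absurd (hαβ.eq_of_length h) hαβne
    rcases Finset.mem_union.1 hρ with h | h
    · have := key_step n S' U hS'U (α ++ [k']) β hS'.1 ρ h hβρ hβρne (by simpa using hlen)
      exact this
    · obtain ⟨i, _, h⟩ := Finset.mem_biUnion.1 h
      exact key_step n (Si i) U (hSiU i) (α ++ [k i]) β (hSi i).1 ρ h hβρ hβρne
        (by simpa using hlen)
end
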